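/- Let A ∈ ℝ^{M×R} have linearly independent columns a₁,…,a_R and let b ∈ ℝ^R satisfy b ≥ 0 entrywise and Σ_{r=1}^R b_r = 1. Then ‖Ab‖₂ ≤ max_{r=1,…,R} ‖a_r‖₂. Moreover, if ‖Ab‖₂ = max_{r=1,…,R} ‖a_r‖₂, then b = e_r for some index r with ‖a_r‖₂ = max_{r'} ‖a_{r'}‖₂, where e_r denotes the r-th standard unit vector of ℝ^R. -/
import Mathlib


/-- The Euclidean norm of a vector in `ℝ^n`. -/
noncomputable def euclNorm {n : ℕ} (x : Fin n → ℝ) : ℝ := Real.sqrt (∑ i, x i ^ 2)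

open scoped RealInnerProductSpace

/-- SPA correctness step: if `A` has linearly independent columns and `b ≥ 0` sums to one,
then `‖Ab‖₂ ≤ max_r ‖a_r‖₂`; equality forces `b = e_r` for some index `r` attaining the
maximal column norm. -/
theorem spa_first_step {M R : ℕ} (A : Matrix (Fin M) (Fin R) ℝ)
    (hA : LinearIndependent ℝ (fun r : Fin R => fun i : Fin M => A i r))
    (b : Fin R → ℝ) (hb : ∀ r, 0 ≤ b r) (hsum : ∑ r, b r = 1) :
    euclNorm (A.mulVec b) ≤ (⨆ r : Fin R, euclNorm (fun i => A i r)) ∧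
    (euclNorm (A.mulVec b) = (⨆ r : Fin R, euclNorm (fun i => A i r)) →
      ∃ r : Fin R, b = Pi.single r 1 ∧
        euclNorm (fun i => A i r) = (⨆ r' : Fin R, euclNorm (fun i => A i r'))) := by
  have hR : Nonempty (Fin R) := by
    rcases Nat.eq_zero_or_pos R with h | h
    · exfalso; subst h; simp at hsum
    · exact ⟨⟨0, h⟩⟩
  set f : Fin R → EuclideanSpace ℝ (Fin M) :=
    fun r => (WithLp.equiv 2 (Fin M → ℝ)).symm (fun i => A i r) with hf
  have hnorm : ∀ y : Fin M → ℝ, euclNorm y = ‖(WithLp.equiv 2 (Fin M → ℝ)).symm y‖ := by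
    intro y
    rw [EuclideanSpace.norm_eq]
    simp [euclNorm, Real.norm_eq_abs, sq_abs]
  set g : Fin R → ℝ := fun r => euclNorm (fun i => A i r) with hg
  have hfg : ∀ r, g r = ‖f r‖ := fun r => hnorm _
  set m : ℝ := ⨆ r, g r with hm
  have hbdd : BddAbove (Set.range g) := (Set.finite_range g).bddAbove
  have hle : ∀ r, g r ≤ m := fun r => le_ciSup hbdd r
  set x : EuclideanSpace ℝ (Fin M) := (WithLp.equiv 2 (Fin M → ℝ)).symm (A.mulVec b) with hxdef
  have hxsum : x = ∑ r, b r • f r := by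
    apply (WithLp.linearEquiv 2 ℝ (Fin M → ℝ)).injective
    rw [map_sum]
    funext i
    simp [WithLp.linearEquiv, hf, hxdef, Matrix.mulVec, dotProduct,
      Finset.sum_apply, mul_comm]
  have hxn : euclNorm (A.mulVec b) = ‖x‖ := hnorm _
  have htri : ‖x‖ ≤ m := by
    rw [hxsum]
    calc ‖∑ r, b r • f r‖ ≤ ∑ r, ‖b r • f r‖ := norm_sum_le _ _
      _ = ∑ r, b r * ‖f r‖ := by
          refine Finset.sum_congr rfl fun r _ => ?_
          rw [norm_smul, Real.norm_eq_abs, abs_of_nonneg (hb r)]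
      _ ≤ ∑ r, b r * m := by
          refine Finset.sum_le_sum fun r _ => ?_
          exact mul_le_mul_of_nonneg_left (by rw [← hfg r]; exact hle r) (hb r)
      _ = m := by rw [← Finset.sum_mul, hsum, one_mul]
  refine ⟨by rw [hxn]; exact htri, ?_⟩
  intro heq
  have hxm : ‖x‖ = m := by rw [← hxn]; exact heq
  obtain ⟨r0⟩ := hR
  have hmpos : 0 < m := by
    have hfr0 : f r0 ≠ 0 := by
      intro h
      apply hA.ne_zero r0
      have := congrArg (WithLp.equiv 2 (Fin M → ℝ)) h
      simpa [hf] using this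
    have h1 : 0 < ‖f r0‖ := norm_pos_iff.mpr hfr0
    calc (0:ℝ) < ‖f r0‖ := h1
      _ = g r0 := (hfg r0).symm
      _ ≤ m := hle r0
  have hinner : ∀ r, ⟪f r, x⟫ ≤ m * m := by
    intro r
    calc ⟪f r, x⟫ ≤ ‖f r‖ * ‖x‖ := real_inner_le_norm _ _
      _ ≤ m * m := mul_le_mul (by rw [← hfg r]; exact hle r) (le_of_eq hxm)
          (norm_nonneg _) (le_of_lt hmpos)
  have hsum_inner : ∑ r, b r * ⟪f r, x⟫ = m * m := by
    have h2 : ⟪x, x⟫ = ∑ r, b r * ⟪f r, x⟫ := by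
      conv_lhs => rw [hxsum]
      rw [sum_inner]
      exact Finset.sum_congr rfl fun r _ => by rw [real_inner_smul_left, ← hxsum]
    rw [← h2, real_inner_self_eq_norm_mul_norm, hxm]
  have hterm : ∀ r, b r * ⟪f r, x⟫ = b r * (m * m) := by
    have hles : ∀ r ∈ Finset.univ, b r * ⟪f r, x⟫ ≤ b r * (m * m) :=
      fun r _ => mul_le_mul_of_nonneg_left (hinner r) (hb r)
    have hsums : ∑ r, b r * (m * m) = ∑ r, b r * ⟪f r, x⟫ := by
      rw [hsum_inner, ← Finset.sum_mul, hsum, one_mul]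
    intro r
    exact (Finset.sum_eq_sum_iff_of_le hles).mp hsums.symm r (Finset.mem_univ r)
  have hsupp : ∀ r, 0 < b r → f r = x := by
    intro r hr
    have hinr : ⟪f r, x⟫ = m * m :=
      mul_left_cancel₀ (ne_of_gt hr) (hterm r)
    have h1 : ‖f r‖ ^ 2 ≤ m ^ 2 := by
      apply sq_le_sq'
      · linarith [norm_nonneg (f r)]
      · rw [← hfg r]; exact hle r
    have hsq : ‖f r - x‖ ^ 2 ≤ 0 := by
      rw [norm_sub_sq_real, hinr, hxm]
      nlinarith
    have h0 : ‖f r - x‖ = 0 := by nlinarith [norm_nonneg (f r - x)]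
    exact sub_eq_zero.mp (norm_eq_zero.mp h0)
  obtain ⟨r1, hr1⟩ : ∃ r, 0 < b r := by
    by_contra h
    push_neg at h
    have hz : ∀ r, b r = 0 := fun r => le_antisymm (h r) (hb r)
    simp [hz] at hsum
  have huniq : ∀ r, 0 < b r → r = r1 := by
    intro r hr
    apply hA.injective
    have : f r = f r1 := by rw [hsupp r hr, hsupp r1 hr1]
    have := congrArg (WithLp.equiv 2 (Fin M → ℝ)) this
    simpa [hf] using this
  have hz : ∀ r, r ≠ r1 → b r = 0 := by
    intro r hne
    by_contra h
    exact hne (huniq r (lt_of_le_of_ne (hb r) (Ne.symm h)))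
  have hb1 : b r1 = 1 := by
    rw [← hsum]
    exact (Finset.sum_eq_single r1 (fun r _ hne => hz r hne) (by simp)).symm
  refine ⟨r1, ?_, ?_⟩
  · funext r
    by_cases h : r = r1
    · subst h; simp [hb1]
    · rw [Pi.single_eq_of_ne h, hz r h]
  · have : ‖f r1‖ = m := by rw [hsupp r1 hr1, hxm]
    rw [show euclNorm (fun i => A i r1) = g r1 from rfl, hfg r1, this, hm]
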